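/- arXiv:1411.6205 — 2 statements merged into one kernel-verified Lean document; each statement's English description precedes it below -/
import Mathlib

section
/- Let ρ ≥ 1, let C = {x ∈ ℝ^ρ : ⟨x, u_i⟩ ≥ 0 for i = 1, …, k} be a rational polyhedral cone determined by finitely many nonzero integer vectors u₁, …, u_k ∈ ℤ^ρ, and let b ∈ C. Then there exists a positive integer m such that for every integer point ξ ∈ ℤ^ρ lying in the interior int(C) of C, one has mξ ∈ b + C, i.e. mξ − b ∈ C. -/
/-- For a rational polyhedral cone `C` and any `b ∈ C`, there is a positive integer `m`
such that `m • ξ - b ∈ C` for every integer point `ξ` in the interior of `C`. -/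
theorem stmt_4 (ρ k : ℕ) (hρ : 1 ≤ ρ)
    (u : Fin k → Fin ρ → ℤ) (hu : ∀ i, u i ≠ 0)
    (uR : Fin k → EuclideanSpace ℝ (Fin ρ)) (huR : ∀ i j, uR i j = (u i j : ℝ))
    (C : Set (EuclideanSpace ℝ (Fin ρ)))
    (hC : C = {x : EuclideanSpace ℝ (Fin ρ) | ∀ i, 0 ≤ (inner ℝ x (uR i) : ℝ)})
    (b : EuclideanSpace ℝ (Fin ρ)) (hb : b ∈ C) :
    ∃ m : ℕ, 0 < m ∧
      ∀ ξ : EuclideanSpace ℝ (Fin ρ), (∀ i, ∃ z : ℤ, ξ i = (z : ℝ)) →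
        ξ ∈ interior C → (m : ℝ) • ξ - b ∈ C := by
  -- choose n with inner b (uR i) ≤ n for all i
  obtain ⟨n, hn⟩ := exists_nat_ge (∑ i, |(inner ℝ b (uR i) : ℝ)|)
  have hbound : ∀ i, (inner ℝ b (uR i) : ℝ) ≤ n := by
    intro i
    refine le_trans (le_abs_self _) (le_trans ?_ hn)
    exact Finset.single_le_sum (f := fun j => |(inner ℝ b (uR j) : ℝ)|)
      (fun j _ => abs_nonneg _) (Finset.mem_univ i)
  refine ⟨n + 1, Nat.succ_pos n, ?_⟩
  intro ξ hξint hξ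
  -- uR i ≠ 0
  have huRne : ∀ i, uR i ≠ 0 := by
    intro i h
    apply hu i
    funext j
    have h2 : (u i j : ℝ) = 0 := by rw [← huR]; simpa using congrArg (· j) h
    exact_mod_cast h2
  -- positivity of inner ξ (uR i)
  have hpos : ∀ i, 0 < (inner ℝ ξ (uR i) : ℝ) := by
    intro i
    obtain ⟨ε, hε, hball⟩ := Metric.isOpen_iff.1 isOpen_interior ξ hξ
    have hnorm : 0 < ‖uR i‖ := norm_pos_iff.2 (huRne i)
    set δ : ℝ := ε / (2 * ‖uR i‖) with hδ
    have hδpos : 0 < δ := div_pos hε (by positivity)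
    have hmem : ξ - δ • uR i ∈ C := by
      apply interior_subset
      apply hball
      rw [Metric.mem_ball, dist_eq_norm]
      have : ξ - δ • uR i - ξ = -(δ • uR i) := by abel
      rw [this, norm_neg, norm_smul, Real.norm_eq_abs, abs_of_pos hδpos]
      have heq : δ * ‖uR i‖ = ε / 2 := by
        rw [hδ]; field_simp
      rw [heq]; linarith
    rw [hC] at hmem
    have h0 := hmem i
    have hinner : (inner ℝ (ξ - δ • uR i) (uR i) : ℝ)
        = inner ℝ ξ (uR i) - δ * ‖uR i‖ ^ 2 := by
      rw [inner_sub_left, real_inner_smul_left, real_inner_self_eq_norm_sq]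
    rw [hinner] at h0
    have hp : 0 < δ * ‖uR i‖ ^ 2 := by positivity
    linarith
  -- integrality : inner ξ (uR i) is an integer
  choose z hz using hξint
  have hint : ∀ i, (inner ℝ ξ (uR i) : ℝ) = ((∑ j, z j * u i j : ℤ) : ℝ) := by
    intro i
    rw [PiLp.inner_apply]
    push_cast
    refine Finset.sum_congr rfl fun j _ => ?_
    rw [RCLike.inner_apply, conj_trivial, hz, huR, mul_comm]
  have hge1 : ∀ i, (1 : ℝ) ≤ (inner ℝ ξ (uR i) : ℝ) := by
    intro i
    rw [hint i]
    have h0 : (0 : ℝ) < ((∑ j, z j * u i j : ℤ) : ℝ) := by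
      rw [← hint i]; exact hpos i
    have hz0 : (0 : ℤ) < ∑ j, z j * u i j := by exact_mod_cast h0
    exact_mod_cast hz0
  rw [hC]
  intro i
  rw [inner_sub_left, real_inner_smul_left]
  have h1 := hge1 i
  have h2 := hbound i
  have h3 : ((n : ℝ) + 1) * 1 ≤ ((n : ℝ) + 1) * (inner ℝ ξ (uR i) : ℝ) := by
    apply mul_le_mul_of_nonneg_left h1 (by positivity)
  push_cast
  nlinarith
end

section
/- Let Δ ⊆ ℝ² be a convex set and let S ⊆ Δ ∩ ℚ² be a set of points with rational coordinates such that (a) S is dense in Δ, and (b) S is closed under rational convex combinations, i.e. for all p, q ∈ S and every rational λ ∈ [0,1] one has λp + (1−λ)q ∈ S. Then every point of the interior of Δ with rational coordinates belongs to S. -/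
set_option maxHeartbeats 2000000 in
/-- If a set `S` of rational points of a convex set `Δ ⊆ ℝ²` is dense in `Δ` and closed
under rational convex combinations, then `S` contains every rational point of the
interior of `Δ`. -/
theorem stmt_7 (Δ S : Set (ℝ × ℝ)) (hΔ : Convex ℝ Δ)
    (hSsub : S ⊆ Δ) (hSrat : ∀ p ∈ S, ∃ a b : ℚ, p = ((a : ℝ), (b : ℝ)))
    (hdense : Δ ⊆ closure S)
    (hcomb : ∀ p ∈ S, ∀ q ∈ S, ∀ l : ℚ, 0 ≤ l → l ≤ 1 →
      (l : ℝ) • p + (1 - (l : ℝ)) • q ∈ S) :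
    ∀ p ∈ interior Δ, (∃ a b : ℚ, p = ((a : ℝ), (b : ℝ))) → p ∈ S := by
  rintro p hp ⟨a, b, rfl⟩
  obtain ⟨ε, hε, hball⟩ := Metric.isOpen_iff.mp isOpen_interior _ hp
  set e : ℝ := ε / 2 with hedef
  have he : 0 < e := by positivity
  set δ : ℝ := e / 10 with hδdef
  have hδ : 0 < δ := by positivity
  clear_value e δ
  have pick : ∀ v : ℝ × ℝ, |v.1| < ε → |v.2| < ε →
      ∃ x y : ℚ, ((x : ℝ), (y : ℝ)) ∈ S ∧
        |(x : ℝ) - ((a : ℝ) + v.1)| < δ ∧ |(y : ℝ) - ((b : ℝ) + v.2)| < δ := by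
    intro v h1 h2
    have hmem : (((a : ℝ) + v.1, (b : ℝ) + v.2) : ℝ × ℝ) ∈ Δ := by
      apply interior_subset
      apply hball
      rw [Metric.mem_ball, Prod.dist_eq]
      apply max_lt <;> rw [Real.dist_eq] <;> simpa using by assumption
    have hc := hdense hmem
    rw [Metric.mem_closure_iff] at hc
    obtain ⟨q, hqS, hq⟩ := hc δ hδ
    obtain ⟨x, y, rfl⟩ := hSrat q hqS
    rw [Prod.dist_eq] at hq
    have h1' := lt_of_le_of_lt (le_max_left _ _) hq
    have h2' := lt_of_le_of_lt (le_max_right _ _) hq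
    rw [Real.dist_eq] at h1' h2'
    exact ⟨x, y, hqS, by rw [abs_sub_comm]; exact h1', by rw [abs_sub_comm]; exact h2'⟩
  have habs : |e| < ε ∧ |(0:ℝ)| < ε ∧ |(-e)| < ε := by
    constructor
    · rw [abs_of_pos he]; linarith
    constructor
    · simpa using hε
    · rw [abs_of_neg (by linarith)]; linarith
  obtain ⟨x1, y1, h1S, h1x, h1y⟩ := pick (e, 0) habs.1 habs.2.1
  obtain ⟨x2, y2, h2S, h2x, h2y⟩ := pick (0, e) habs.2.1 habs.1
  obtain ⟨x3, y3, h3S, h3x, h3y⟩ := pick (-e, -e) habs.2.2 habs.2.2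
  norm_num at h1x h1y h2x h2y h3x h3y
  -- rational displacements
  set s1 : ℚ := x1 - a with hs1def
  set t1 : ℚ := y1 - b with ht1def
  set s2 : ℚ := x2 - a with hs2def
  set t2 : ℚ := y2 - b with ht2def
  set s3 : ℚ := x3 - a with hs3def
  set t3 : ℚ := y3 - b with ht3def
  clear_value s1 t1 s2 t2 s3 t3
  -- real bounds on displacements
  have hb1x : e - δ < (s1 : ℝ) ∧ (s1 : ℝ) < e + δ := by
    rw [abs_lt] at h1x; push_cast [hs1def]; constructor <;> [linarith [h1x.1]; linarith [h1x.2]]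
  have hb1y : -δ < (t1 : ℝ) ∧ (t1 : ℝ) < δ := by
    rw [abs_lt] at h1y; push_cast [ht1def]; constructor <;> [linarith [h1y.1]; linarith [h1y.2]]
  have hb2x : -δ < (s2 : ℝ) ∧ (s2 : ℝ) < δ := by
    rw [abs_lt] at h2x; push_cast [hs2def]; constructor <;> [linarith [h2x.1]; linarith [h2x.2]]
  have hb2y : e - δ < (t2 : ℝ) ∧ (t2 : ℝ) < e + δ := by
    rw [abs_lt] at h2y; push_cast [ht2def]; constructor <;> [linarith [h2y.1]; linarith [h2y.2]]
  have hb3x : -e - δ < (s3 : ℝ) ∧ (s3 : ℝ) < -e + δ := by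
    rw [abs_lt] at h3x; push_cast [hs3def]; constructor <;> [linarith [h3x.1]; linarith [h3x.2]]
  have hb3y : -e - δ < (t3 : ℝ) ∧ (t3 : ℝ) < -e + δ := by
    rw [abs_lt] at h3y; push_cast [ht3def]; constructor <;> [linarith [h3y.1]; linarith [h3y.2]]
  -- barycentric numerators (Cramer)
  set c1 : ℚ := s2 * t3 - t2 * s3 with hc1def
  set c2 : ℚ := s3 * t1 - t3 * s1 with hc2def
  set c3 : ℚ := s1 * t2 - t1 * s2 with hc3def
  clear_value c1 c2 c3
  have hδe : δ = e / 10 := hδdef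
  have hc1R : (0 : ℝ) < (c1 : ℝ) := by
    push_cast [hc1def]
    nlinarith [mul_pos (show (0:ℝ) < (s2:ℝ) + δ by linarith [hb2x.1])
        (show (0:ℝ) < (t3:ℝ) + e + δ by linarith [hb3y.1]),
      mul_pos (show (0:ℝ) < δ - (s2:ℝ) by linarith [hb2x.2])
        (show (0:ℝ) < -e + δ - (t3:ℝ) by linarith [hb3y.2]),
      mul_pos (show (0:ℝ) < e + δ - (t2:ℝ) by linarith [hb2y.2])
        (show (0:ℝ) < (s3:ℝ) + e + δ by linarith [hb3x.1]),
      mul_pos (show (0:ℝ) < (t2:ℝ) - e + δ by linarith [hb2y.1])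
        (show (0:ℝ) < -e + δ - (s3:ℝ) by linarith [hb3x.2]),
      mul_pos he he, he, hδ]
  have hc2R : (0 : ℝ) < (c2 : ℝ) := by
    push_cast [hc2def]
    nlinarith [mul_pos (show (0:ℝ) < (t1:ℝ) + δ by linarith [hb1y.1])
        (show (0:ℝ) < (s3:ℝ) + e + δ by linarith [hb3x.1]),
      mul_pos (show (0:ℝ) < δ - (t1:ℝ) by linarith [hb1y.2])
        (show (0:ℝ) < -e + δ - (s3:ℝ) by linarith [hb3x.2]),
      mul_pos (show (0:ℝ) < e + δ - (s1:ℝ) by linarith [hb1x.2])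
        (show (0:ℝ) < (t3:ℝ) + e + δ by linarith [hb3y.1]),
      mul_pos (show (0:ℝ) < (s1:ℝ) - e + δ by linarith [hb1x.1])
        (show (0:ℝ) < -e + δ - (t3:ℝ) by linarith [hb3y.2]),
      mul_pos he he, he, hδ]
  have hc3R : (0 : ℝ) < (c3 : ℝ) := by
    push_cast [hc3def]
    nlinarith [mul_pos (show (0:ℝ) < (s1:ℝ) - e + δ by linarith [hb1x.1])
        (show (0:ℝ) < (t2:ℝ) - e + δ by linarith [hb2y.1]),
      mul_pos (show (0:ℝ) < e + δ - (s1:ℝ) by linarith [hb1x.2])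
        (show (0:ℝ) < e + δ - (t2:ℝ) by linarith [hb2y.2]),
      mul_pos (show (0:ℝ) < (t1:ℝ) + δ by linarith [hb1y.1])
        (show (0:ℝ) < δ - (s2:ℝ) by linarith [hb2x.2]),
      mul_pos (show (0:ℝ) < δ - (t1:ℝ) by linarith [hb1y.2])
        (show (0:ℝ) < (s2:ℝ) + δ by linarith [hb2x.1]),
      mul_pos he he, he, hδ]
  have hc1q : 0 < c1 := by exact_mod_cast hc1R
  have hc2q : 0 < c2 := by exact_mod_cast hc2R
  have hc3q : 0 < c3 := by exact_mod_cast hc3R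
  set K : ℚ := c1 + c2 + c3 with hKdef
  clear_value K
  have hKq : 0 < K := by rw [hKdef]; linarith
  have h23 : 0 < c2 + c3 := by positivity
  set l : ℚ := c1 / K with hldef
  set m : ℚ := c2 / (c2 + c3) with hmdef
  clear_value l m
  have hl0 : 0 ≤ l := by rw [hldef]; exact le_of_lt (div_pos hc1q hKq)
  have hl1 : l ≤ 1 := by rw [hldef, div_le_one hKq]; rw [hKdef]; linarith
  have hm0 : 0 ≤ m := by rw [hmdef]; exact le_of_lt (div_pos hc2q h23)
  have hm1 : m ≤ 1 := by rw [hmdef, div_le_one h23]; linarith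
  have step1 := hcomb _ h2S _ h3S m hm0 hm1
  have step2 := hcomb _ h1S _ step1 l hl0 hl1
  -- the rational identities
  have hKne : K ≠ 0 := ne_of_gt hKq
  have h23ne : c2 + c3 ≠ 0 := ne_of_gt h23
  have hsumx : c1 * x1 + c2 * x2 + c3 * x3 = K * a := by
    rw [hKdef, hc1def, hc2def, hc3def, hs1def, ht1def, hs2def, ht2def, hs3def, ht3def]
    ring
  have hsumy : c1 * y1 + c2 * y2 + c3 * y3 = K * b := by
    rw [hKdef, hc1def, hc2def, hc3def, hs1def, ht1def, hs2def, ht2def, hs3def, ht3def]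
    ring
  have hK23 : K - c1 = c2 + c3 := by rw [hKdef]; ring
  have hxq : l * x1 + (1 - l) * (m * x2 + (1 - m) * x3) = a := by
    rw [hldef, hmdef]
    field_simp
    linear_combination (c2 + c3) * hsumx + (c2 * x2 + c3 * x3) * hK23
  have hyq : l * y1 + (1 - l) * (m * y2 + (1 - m) * y3) = b := by
    rw [hldef, hmdef]
    field_simp
    linear_combination (c2 + c3) * hsumy + (c2 * y2 + c3 * y3) * hK23
  have hfinal : (l : ℝ) • (((x1 : ℝ), (y1 : ℝ)) : ℝ × ℝ) +
      (1 - (l : ℝ)) • ((m : ℝ) • (((x2 : ℝ), (y2 : ℝ)) : ℝ × ℝ) +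
        (1 - (m : ℝ)) • (((x3 : ℝ), (y3 : ℝ)) : ℝ × ℝ)) = ((a : ℝ), (b : ℝ)) := by
    have hx' : ((l * x1 + (1 - l) * (m * x2 + (1 - m) * x3) : ℚ) : ℝ) = ((a : ℚ) : ℝ) := by
      exact congrArg (fun r : ℚ => (r : ℝ)) hxq
    have hy' : ((l * y1 + (1 - l) * (m * y2 + (1 - m) * y3) : ℚ) : ℝ) = ((b : ℚ) : ℝ) := by
      exact congrArg (fun r : ℚ => (r : ℝ)) hyq
    push_cast at hx' hy'
    ext
    · simpa using hx'
    · simpa using hy'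
  rw [hfinal] at step2
  exact step2
end
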